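/- Let ν̄(x) = 1/(1 + |x|^α) for x ∈ ℝ^d with α > d. Then for all p ≥ 2 and x_1,…,x_p ∈ ℝ^d: ∫_{ℝ^d} ∏_{r=1}^p ν̄(x_r − y) dy ≤ 2^{α(p−1)} ν̄_1 ∑_{r=1}^p ∏_{k≠r} ν̄(x_k − x_r), where ν̄_1 = ∫_{ℝ^d} ν̄(x) dx < ∞. -/

import Mathlib

open MeasureTheory Module

private lemma key_inv {α a b : ℝ} (hα : 0 < α) (hb : 0 ≤ b)
    (h : b ≤ 2 * a) : (1 + a ^ α)⁻¹ ≤ 2 ^ α * (1 + b ^ α)⁻¹ := by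
  have ha : 0 ≤ a := by nlinarith
  have ha' : (0:ℝ) < 1 + a ^ α := by positivity
  have hb' : (0:ℝ) < 1 + b ^ α := by positivity
  have h2 : (1:ℝ) ≤ 2 ^ α := Real.one_le_rpow one_le_two hα.le
  have hbound : 1 + b ^ α ≤ 2 ^ α * (1 + a ^ α) := by
    have hba : b ^ α ≤ (2 * a) ^ α := Real.rpow_le_rpow hb h hα.le
    rw [Real.mul_rpow (by norm_num) ha] at hba
    nlinarith [Real.rpow_nonneg ha α]
  rw [inv_eq_one_div, inv_eq_one_div, mul_one_div, div_le_div_iff₀ ha' hb', one_mul]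
  exact hbound

private lemma integrable_g {d : ℕ} {α : ℝ} (hα : (d:ℝ) < α) :
    Integrable (fun y : EuclideanSpace ℝ (Fin d) => (1 + ‖y‖ ^ α)⁻¹) := by
  have hα0 : (0:ℝ) < α := lt_of_le_of_lt (Nat.cast_nonneg d) hα
  have hd : (finrank ℝ (EuclideanSpace ℝ (Fin d)) : ℝ) < α := by
    simpa [finrank_euclideanSpace_fin] using hα
  refine ((integrable_one_add_norm hd).const_mul ((2:ℝ) ^ α)).mono'
    ?_ (Filter.Eventually.of_forall fun y => ?_)
  · apply Measurable.aestronglyMeasurable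
    fun_prop
  · have hy : (0:ℝ) ≤ ‖y‖ := norm_nonneg y
    have h1 : (0:ℝ) < 1 + ‖y‖ ^ α := by positivity
    have h2 : (0:ℝ) < 1 + ‖y‖ := by positivity
    rw [Real.norm_eq_abs, abs_of_nonneg (by positivity), Real.rpow_neg h2.le,
      inv_eq_one_div, inv_eq_one_div, mul_one_div, div_le_div_iff₀ h1 (by positivity), one_mul]
    rcases le_total ‖y‖ 1 with ht | ht
    · calc (1 + ‖y‖) ^ α ≤ (2:ℝ) ^ α := Real.rpow_le_rpow (by positivity) (by linarith) hα0.le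
        _ ≤ (2:ℝ) ^ α * (1 + ‖y‖ ^ α) := le_mul_of_one_le_right (by positivity)
            (by nlinarith [Real.rpow_nonneg hy α])
    · calc (1 + ‖y‖) ^ α ≤ (2 * ‖y‖) ^ α :=
            Real.rpow_le_rpow (by positivity) (by linarith) hα0.le
        _ = (2:ℝ) ^ α * ‖y‖ ^ α := Real.mul_rpow (by norm_num) hy
        _ ≤ (2:ℝ) ^ α * (1 + ‖y‖ ^ α) := by
            refine mul_le_mul_of_nonneg_left (by linarith) (Real.rpow_nonneg (by norm_num) α)

theorem stmt_7 (d : ℕ) (α : ℝ) (hα : (d : ℝ) < α) (p : ℕ) (hp : 2 ≤ p)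
    (x : Fin p → EuclideanSpace ℝ (Fin d)) :
    ∫ y : EuclideanSpace ℝ (Fin d), ∏ r : Fin p, (1 + ‖x r - y‖ ^ α)⁻¹
      ≤ (2 : ℝ) ^ (α * ((p : ℝ) - 1)) *
          (∫ y : EuclideanSpace ℝ (Fin d), (1 + ‖y‖ ^ α)⁻¹) *
          ∑ r : Fin p, ∏ k ∈ Finset.univ.erase r, (1 + ‖x k - x r‖ ^ α)⁻¹ := by
  classical
  have hα0 : (0:ℝ) < α := lt_of_le_of_lt (Nat.cast_nonneg d) hα
  have hg_int : Integrable (fun y : EuclideanSpace ℝ (Fin d) => (1 + ‖y‖ ^ α)⁻¹) :=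
    integrable_g hα
  set C : Fin p → ℝ := fun r => ∏ k ∈ Finset.univ.erase r, (1 + ‖x k - x r‖ ^ α)⁻¹ with hC
  have hC_nonneg : ∀ r, 0 ≤ C r := fun r => Finset.prod_nonneg fun k _ => by positivity
  have hint_r : ∀ r : Fin p,
      Integrable (fun y : EuclideanSpace ℝ (Fin d) => (1 + ‖x r - y‖ ^ α)⁻¹) :=
    fun r => hg_int.comp_sub_left (x r)
  have hpoint : ∀ y : EuclideanSpace ℝ (Fin d),
      ∏ r : Fin p, (1 + ‖x r - y‖ ^ α)⁻¹ ≤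
      (2:ℝ) ^ (α * ((p:ℝ) - 1)) * ∑ r : Fin p, (1 + ‖x r - y‖ ^ α)⁻¹ * C r := by
    intro y
    obtain ⟨r0, -, hr0⟩ := Finset.exists_min_image Finset.univ (fun r => ‖x r - y‖)
      ⟨⟨0, by omega⟩, Finset.mem_univ _⟩
    have h1 : ∏ r : Fin p, (1 + ‖x r - y‖ ^ α)⁻¹
        = (1 + ‖x r0 - y‖ ^ α)⁻¹ * ∏ k ∈ Finset.univ.erase r0, (1 + ‖x k - y‖ ^ α)⁻¹ :=
      (Finset.mul_prod_erase _ _ (Finset.mem_univ r0)).symm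
    have h2 : ∏ k ∈ Finset.univ.erase r0, (1 + ‖x k - y‖ ^ α)⁻¹
        ≤ ∏ k ∈ Finset.univ.erase r0, ((2:ℝ) ^ α * (1 + ‖x k - x r0‖ ^ α)⁻¹) := by
      refine Finset.prod_le_prod (fun k _ => by positivity) (fun k _ => ?_)
      refine key_inv hα0 (norm_nonneg _) ?_
      calc ‖x k - x r0‖ = ‖(x k - y) - (x r0 - y)‖ := by congr 1; abel
        _ ≤ ‖x k - y‖ + ‖x r0 - y‖ := norm_sub_le _ _
        _ ≤ ‖x k - y‖ + ‖x k - y‖ := by gcongr; exact hr0 k (Finset.mem_univ k)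
        _ = 2 * ‖x k - y‖ := by ring
    have hcard : (Finset.univ.erase r0).card = p - 1 := by
      rw [Finset.card_erase_of_mem (Finset.mem_univ r0), Finset.card_univ, Fintype.card_fin]
    have h3 : ∏ k ∈ Finset.univ.erase r0, ((2:ℝ) ^ α * (1 + ‖x k - x r0‖ ^ α)⁻¹)
        = (2:ℝ) ^ (α * ((p:ℝ) - 1)) * C r0 := by
      rw [Finset.prod_mul_distrib, Finset.prod_const, hcard]
      congr 1
      rw [← Real.rpow_natCast ((2:ℝ) ^ α) (p - 1), ← Real.rpow_mul (by norm_num)]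
      congr 1
      have h1p : (1:ℕ) ≤ p := by omega
      rw [Nat.cast_sub h1p, Nat.cast_one]
    calc ∏ r : Fin p, (1 + ‖x r - y‖ ^ α)⁻¹
        ≤ (1 + ‖x r0 - y‖ ^ α)⁻¹ * ((2:ℝ) ^ (α * ((p:ℝ) - 1)) * C r0) := by
          rw [h1]; exact mul_le_mul_of_nonneg_left (h2.trans_eq h3) (by positivity)
      _ = (2:ℝ) ^ (α * ((p:ℝ) - 1)) * ((1 + ‖x r0 - y‖ ^ α)⁻¹ * C r0) := by ring
      _ ≤ (2:ℝ) ^ (α * ((p:ℝ) - 1)) * ∑ r : Fin p, (1 + ‖x r - y‖ ^ α)⁻¹ * C r := by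
          refine mul_le_mul_of_nonneg_left ?_ (by positivity)
          exact Finset.single_le_sum (f := fun r => (1 + ‖x r - y‖ ^ α)⁻¹ * C r)
            (fun r _ => mul_nonneg (by positivity) (hC_nonneg r)) (Finset.mem_univ r0)
  have hRHS_int : Integrable (fun y : EuclideanSpace ℝ (Fin d) =>
      (2:ℝ) ^ (α * ((p:ℝ) - 1)) * ∑ r : Fin p, (1 + ‖x r - y‖ ^ α)⁻¹ * C r) := by
    refine Integrable.const_mul ?_ _
    exact integrable_finset_sum _ (fun r _ => (hint_r r).mul_const (C r))
  have hmono := integral_mono_of_nonneg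
    (Filter.Eventually.of_forall fun y => Finset.prod_nonneg fun r _ => by positivity)
    hRHS_int (Filter.Eventually.of_forall hpoint)
  refine hmono.trans_eq ?_
  rw [integral_const_mul, integral_finset_sum _ (fun r _ => (hint_r r).mul_const (C r))]
  have hint_eq : ∀ r : Fin p, (∫ y : EuclideanSpace ℝ (Fin d), (1 + ‖x r - y‖ ^ α)⁻¹ * C r)
      = (∫ y : EuclideanSpace ℝ (Fin d), (1 + ‖y‖ ^ α)⁻¹) * C r := by
    intro r
    rw [integral_mul_const]
    congr 1
    exact integral_sub_left_eq_self
      (fun y : EuclideanSpace ℝ (Fin d) => (1 + ‖y‖ ^ α)⁻¹) volume (x r)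
  rw [Finset.sum_congr rfl (fun r _ => hint_eq r), ← Finset.mul_sum]
  ring
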